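/- A finite direct product A × B is top if and only if both A and B are top. -/

import Mathlib

section Aux

variable {G P : Type*} [Group G] [Group P]

lemma ab_of_surjective : Function.Surjective (Abelianization.of (G := G)) :=
  fun x => Quotient.inductionOn x fun g => ⟨g, rfl⟩

lemma ab_map_surjective {f : G →* P} (hf : Function.Surjective f) :
    Function.Surjective (Abelianization.map f) := by
  intro y
  obtain ⟨p, rfl⟩ := ab_of_surjective y
  obtain ⟨g, rfl⟩ := hf p
  exact ⟨Abelianization.of g, Abelianization.map_of f g⟩

lemma card_ab_congr (e : G ≃* P) :
    Nat.card (Abelianization G) = Nat.card (Abelianization P) :=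
  Nat.card_congr e.abelianizationCongr.toEquiv

/-- Key lemma: for a surjective hom `f : G →* P`,
`|G^ab| ≤ |P^ab| * |(ker f)^ab|`. -/
lemma card_ab_le [Finite G] (f : G →* P) (hf : Function.Surjective f) :
    Nat.card (Abelianization G) ≤
      Nat.card (Abelianization P) * Nat.card (Abelianization f.ker) := by
  have : Finite P := Finite.of_surjective f hf
  set q : Abelianization G →* Abelianization P := Abelianization.map f with hqdef
  have hqs : Function.Surjective q := ab_map_surjective hf
  have h1 : Nat.card (Abelianization G) = Nat.card (Abelianization P) * Nat.card q.ker := by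
    rw [Subgroup.card_eq_card_quotient_mul_card_subgroup q.ker]
    congr 1
    exact Nat.card_congr (QuotientGroup.quotientKerEquivOfSurjective q hqs).toEquiv
  rw [h1]
  refine Nat.mul_le_mul_left _ ?_
  -- the lifted inclusion of the kernel
  set j : f.ker →* Abelianization G := Abelianization.of.comp f.ker.subtype with hjdef
  set j' : Abelianization f.ker →* Abelianization G := Abelianization.lift j with hj'def
  have hcomm : Subgroup.map f (commutator G) = commutator P := by
    rw [commutator_def, Subgroup.map_commutator, Subgroup.map_top_of_surjective f hf,
      commutator_def]
  have hker : q.ker = j'.range := by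
    ext x
    constructor
    · intro hx
      obtain ⟨g, rfl⟩ := ab_of_surjective x
      have h2 : Abelianization.of (f g) = 1 := by
        have := hx
        rw [MonoidHom.mem_ker, hqdef, Abelianization.map_of] at this
        exact this
      have h3 : f g ∈ commutator P := (QuotientGroup.eq_one_iff (f g)).mp h2
      rw [← hcomm] at h3
      obtain ⟨c, hc, hfc⟩ := h3
      have hk : g * c⁻¹ ∈ f.ker := by
        rw [MonoidHom.mem_ker, map_mul, map_inv, hfc, mul_inv_cancel]
      refine ⟨Abelianization.of ⟨g * c⁻¹, hk⟩, ?_⟩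
      have hc1 : Abelianization.of c = 1 := (QuotientGroup.eq_one_iff c).mpr hc
      rw [hj'def, Abelianization.lift_apply_of, hjdef]
      show Abelianization.of (g * c⁻¹) = Abelianization.of g
      rw [map_mul, map_inv, hc1, inv_one, mul_one]
    · rintro ⟨y, rfl⟩
      obtain ⟨n, rfl⟩ := ab_of_surjective y
      rw [MonoidHom.mem_ker, hj'def, Abelianization.lift_apply_of, hjdef]
      show q (Abelianization.of (n : G)) = 1
      rw [hqdef, Abelianization.map_of]
      have : f (n : G) = 1 := n.2
      rw [this, map_one]
  rw [hker]
  exact Nat.card_le_card_of_surjective j'.rangeRestrict j'.rangeRestrict_surjective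

/-- ker of fst is iso to the second factor. -/
def kerFstEquiv (A B : Type*) [Group A] [Group B] : (MonoidHom.fst A B).ker ≃* B where
  toFun k := (k : A × B).2
  invFun b := ⟨(1, b), by simp [MonoidHom.mem_ker, Subgroup.mem_prod]⟩
  left_inv k := by
    apply Subtype.ext
    have h1 : (k : A × B).1 = 1 := k.2
    exact Prod.ext h1.symm rfl
  right_inv b := rfl
  map_mul' x y := rfl

lemma card_ab_prod (A B : Type*) [Group A] [Group B] [Finite A] [Finite B] :
    Nat.card (Abelianization (A × B)) =
      Nat.card (Abelianization A) * Nat.card (Abelianization B) := by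
  apply le_antisymm
  · have h := card_ab_le (MonoidHom.fst A B) (fun a => ⟨(a, 1), rfl⟩)
    rwa [card_ab_congr (kerFstEquiv A B)] at h
  · have hs : Function.Surjective
        ((Abelianization.map (MonoidHom.fst A B)).prod
          (Abelianization.map (MonoidHom.snd A B))) := by
      rintro ⟨x, y⟩
      obtain ⟨a, rfl⟩ := ab_of_surjective x
      obtain ⟨b, rfl⟩ := ab_of_surjective y
      exact ⟨Abelianization.of (a, b), by
        simp [MonoidHom.prod_apply, Abelianization.map_of]⟩
    have := Nat.card_le_card_of_surjective _ hs
    rwa [Nat.card_prod] at this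
end Aux

def IsTopGroup (G : Type*) [Group G] : Prop :=
  ∀ H : Subgroup G, H ≠ ⊤ →
    Nat.card (Abelianization H) < Nat.card (Abelianization G)

/-- A finite direct product is top iff both factors are top. -/
theorem prod_top_iff (A B : Type*) [Group A] [Group B]
    [Finite A] [Finite B] :
    IsTopGroup (A × B) ↔ IsTopGroup A ∧ IsTopGroup B := by
  have cardA_pos : 0 < Nat.card (Abelianization A) := Nat.card_pos
  have cardB_pos : 0 < Nat.card (Abelianization B) := Nat.card_pos
  constructor
  · intro htop
    constructor
    · intro H hH
      have hS : H.prod (⊤ : Subgroup B) ≠ ⊤ := by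
        intro h
        apply hH
        ext a
        simp only [Subgroup.mem_top, iff_true]
        have : (a, (1 : B)) ∈ H.prod ⊤ := by rw [h]; trivial
        exact this.1
      have h1 := htop _ hS
      have e : ↥(H.prod (⊤ : Subgroup B)) ≃* ↥H × B :=
        (Subgroup.prodEquiv H ⊤).trans ((MulEquiv.refl ↥H).prodCongr Subgroup.topEquiv)
      rw [card_ab_congr e, card_ab_prod, card_ab_prod] at h1
      exact Nat.lt_of_mul_lt_mul_right h1
    · intro H hH
      have hS : (⊤ : Subgroup A).prod H ≠ ⊤ := by
        intro h
        apply hH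
        ext b
        simp only [Subgroup.mem_top, iff_true]
        have : ((1 : A), b) ∈ (⊤ : Subgroup A).prod H := by rw [h]; trivial
        exact this.2
      have h1 := htop _ hS
      have e : ↥((⊤ : Subgroup A).prod H) ≃* A × ↥H :=
        (Subgroup.prodEquiv ⊤ H).trans (Subgroup.topEquiv.prodCongr (MulEquiv.refl ↥H))
      rw [card_ab_congr e, card_ab_prod, card_ab_prod] at h1
      exact Nat.lt_of_mul_lt_mul_left h1
  · rintro ⟨hA, hB⟩ H hH
    have hfs : Function.Surjective ((MonoidHom.fst A B).subgroupMap H) :=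
      (MonoidHom.fst A B).subgroupMap_surjective H
    have hker1 : ∀ k : ((MonoidHom.fst A B).subgroupMap H).ker,
        ((k : ↥H) : A × B).1 = 1 := by
      intro k
      have h := k.2
      rw [MonoidHom.mem_ker] at h
      exact Subtype.ext_iff.mp h
    have hinj : Function.Injective ((MonoidHom.snd A B).comp
        (H.subtype.comp ((MonoidHom.fst A B).subgroupMap H).ker.subtype)) := by
      intro x y hxy
      apply Subtype.ext; apply Subtype.ext
      exact Prod.ext ((hker1 x).trans (hker1 y).symm) hxy
    have ekn : ↥((MonoidHom.fst A B).subgroupMap H).ker ≃*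
        ↥((MonoidHom.snd A B).comp
          (H.subtype.comp ((MonoidHom.fst A B).subgroupMap H).ker.subtype)).range :=
      MonoidHom.ofInjective hinj
    have hmain : Nat.card (Abelianization ↥H) ≤
        Nat.card (Abelianization ↥(H.map (MonoidHom.fst A B))) *
          Nat.card (Abelianization ↥((MonoidHom.snd A B).comp
            (H.subtype.comp ((MonoidHom.fst A B).subgroupMap H).ker.subtype)).range) := by
      rw [← card_ab_congr ekn]
      exact card_ab_le _ hfs
    rw [card_ab_prod]
    by_cases hN : ((MonoidHom.snd A B).comp
        (H.subtype.comp ((MonoidHom.fst A B).subgroupMap H).ker.subtype)).range = ⊤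
    · -- {1} × B ⊆ H, so P must be proper
      have hmem : ∀ b : B, ((1 : A), b) ∈ H := by
        intro b
        have hb : b ∈ ((MonoidHom.snd A B).comp
            (H.subtype.comp ((MonoidHom.fst A B).subgroupMap H).ker.subtype)).range := by
          rw [hN]; trivial
        obtain ⟨k, hk⟩ := hb
        have hkeq : ((k : ↥H) : A × B) = ((1 : A), b) := Prod.ext (hker1 k) hk
        have := ((k : ↥H)).2
        rwa [hkeq] at this
      have hP : H.map (MonoidHom.fst A B) ≠ ⊤ := by
        intro hPt
        apply hH
        ext x
        simp only [Subgroup.mem_top, iff_true]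
        obtain ⟨a, b⟩ := x
        have ha : a ∈ H.map (MonoidHom.fst A B) := by rw [hPt]; trivial
        obtain ⟨⟨a', b'⟩, hmemH, hfa⟩ := Subgroup.mem_map.mp ha
        have ha' : a' = a := hfa
        have h2 := H.mul_mem hmemH (hmem (b'⁻¹ * b))
        have heq : ((a', b') : A × B) * (((1 : A), b'⁻¹ * b)) = (a, b) := by
          rw [Prod.mk_mul_mk, mul_one, mul_inv_cancel_left, ha']
        rwa [heq] at h2
      have hNeq : Nat.card (Abelianization ↥((MonoidHom.snd A B).comp
            (H.subtype.comp ((MonoidHom.fst A B).subgroupMap H).ker.subtype)).range) =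
          Nat.card (Abelianization B) :=
        card_ab_congr ((MulEquiv.subgroupCongr hN).trans Subgroup.topEquiv)
      calc Nat.card (Abelianization ↥H)
          ≤ Nat.card (Abelianization ↥(H.map (MonoidHom.fst A B))) *
              Nat.card (Abelianization B) := by rw [← hNeq]; exact hmain
        _ < Nat.card (Abelianization A) * Nat.card (Abelianization B) :=
            mul_lt_mul_of_pos_right (hA _ hP) cardB_pos
    · have hNlt := hB _ hN
      have hPle : Nat.card (Abelianization ↥(H.map (MonoidHom.fst A B))) ≤
          Nat.card (Abelianization A) := by
        by_cases hP : H.map (MonoidHom.fst A B) = ⊤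
        · exact le_of_eq (card_ab_congr ((MulEquiv.subgroupCongr hP).trans Subgroup.topEquiv))
        · exact le_of_lt (hA _ hP)
      calc Nat.card (Abelianization ↥H)
          ≤ Nat.card (Abelianization ↥(H.map (MonoidHom.fst A B))) *
              Nat.card (Abelianization ↥((MonoidHom.snd A B).comp
                (H.subtype.comp ((MonoidHom.fst A B).subgroupMap H).ker.subtype)).range) :=
            hmain
        _ ≤ Nat.card (Abelianization A) *
              Nat.card (Abelianization ↥((MonoidHom.snd A B).comp
                (H.subtype.comp ((MonoidHom.fst A B).subgroupMap H).ker.subtype)).range) :=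
            Nat.mul_le_mul_right _ hPle
        _ < Nat.card (Abelianization A) * Nat.card (Abelianization B) :=
            mul_lt_mul_of_pos_left hNlt cardA_pos
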